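/- Let K : ℝ² → ℝ be C² with K(0) = −2. Then there exist real numbers a, b, c, d such that the function ĥ(x₁,x₂) := (1/2)x₁² − (1/2)x₂² + a x₁³ + b x₁² x₂ + c x₁ x₂² + d x₂³ satisfies: there are constants C > 0 and r > 0 with |det Hess ĥ(x) − (K(x)/2)(1 + 2∂₁ĥ(x) + |∇ĥ(x)|²)| ≤ C(x₁² + x₂²) for all |x| ≤ r. -/

import Mathlib

/-- First partial derivative of a function on `ℝ × ℝ`. -/
noncomputable def pd1 (f : ℝ × ℝ → ℝ) (x : ℝ × ℝ) : ℝ := fderiv ℝ f x (1, 0)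

/-- Second partial derivative of a function on `ℝ × ℝ`. -/
noncomputable def pd2 (f : ℝ × ℝ → ℝ) (x : ℝ × ℝ) : ℝ := fderiv ℝ f x (0, 1)

/-- Determinant of the Hessian: `∂₁₁f·∂₂₂f − (∂₁₂f)²`. -/
noncomputable def detHess (f : ℝ × ℝ → ℝ) (x : ℝ × ℝ) : ℝ :=
  pd1 (pd1 f) x * pd2 (pd2 f) x - (pd1 (pd2 f) x) ^ 2

def cub (c00 c10 c01 c20 c11 c02 c30 c21 c12 c03 : ℝ) : ℝ × ℝ → ℝ :=
  fun y => c00 + c10*y.1 + c01*y.2 + c20*(y.1*y.1) + c11*(y.1*y.2) + c02*(y.2*y.2)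
    + c30*(y.1*y.1*y.1) + c21*(y.1*y.1*y.2) + c12*(y.1*(y.2*y.2)) + c03*(y.2*y.2*y.2)

lemma cub_hasFDerivAt (c00 c10 c01 c20 c11 c02 c30 c21 c12 c03 : ℝ) (x : ℝ × ℝ) :
    HasFDerivAt (cub c00 c10 c01 c20 c11 c02 c30 c21 c12 c03)
      ((c10 + 2*c20*x.1 + c11*x.2 + 3*c30*(x.1*x.1) + 2*c21*(x.1*x.2) + c12*(x.2*x.2)) • ContinuousLinearMap.fst ℝ ℝ ℝ
        + (c01 + c11*x.1 + 2*c02*x.2 + c21*(x.1*x.1) + 2*c12*(x.1*x.2) + 3*c03*(x.2*x.2)) • ContinuousLinearMap.snd ℝ ℝ ℝ) x := by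
  have h1 : HasFDerivAt (fun y : ℝ × ℝ => y.1) (ContinuousLinearMap.fst ℝ ℝ ℝ) x := hasFDerivAt_fst
  have h2 : HasFDerivAt (fun y : ℝ × ℝ => y.2) (ContinuousLinearMap.snd ℝ ℝ ℝ) x := hasFDerivAt_snd
  have H := (((((((((hasFDerivAt_const c00 x).add (h1.const_mul c10)).add (h2.const_mul c01)).add
    (((h1.mul h1)).const_mul c20)).add ((h1.mul h2).const_mul c11)).add ((h2.mul h2).const_mul c02)).add
    (((h1.mul h1).mul h1).const_mul c30)).add (((h1.mul h1).mul h2).const_mul c21)).add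
    ((h1.mul (h2.mul h2)).const_mul c12)).add (((h2.mul h2).mul h2).const_mul c03)
  refine HasFDerivAt.congr_fderiv H ?_
  refine ContinuousLinearMap.ext fun v => ?_
  simp [ContinuousLinearMap.smul_apply, ContinuousLinearMap.add_apply]
  ring

lemma pd1_cub (c00 c10 c01 c20 c11 c02 c30 c21 c12 c03 : ℝ) :
    pd1 (cub c00 c10 c01 c20 c11 c02 c30 c21 c12 c03)
      = cub c10 (2*c20) c11 (3*c30) (2*c21) c12 0 0 0 0 := by
  funext x
  have H := cub_hasFDerivAt c00 c10 c01 c20 c11 c02 c30 c21 c12 c03 x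
  simp [pd1, H.fderiv, cub]

lemma pd2_cub (c00 c10 c01 c20 c11 c02 c30 c21 c12 c03 : ℝ) :
    pd2 (cub c00 c10 c01 c20 c11 c02 c30 c21 c12 c03)
      = cub c01 c11 (2*c02) c21 (2*c12) (3*c03) 0 0 0 0 := by
  funext x
  have H := cub_hasFDerivAt c00 c10 c01 c20 c11 c02 c30 c21 c12 c03 x
  simp [pd2, H.fderiv, cub]

noncomputable def BRF (K : ℝ × ℝ → ℝ) (c d : ℝ) : ℝ × ℝ → ℝ := fun z =>
  cub (-1) (2*c) (6*d) 0 0 (-(2*c*(2*c))) 0 0 0 0 z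
    - 2⁻¹ * K z * (1 + 2 * cub 0 1 0 0 0 c 0 0 0 0 z
      + (cub 0 1 0 0 0 c 0 0 0 0 z * cub 0 1 0 0 0 c 0 0 0 0 z
        + cub 0 0 (-1) 0 (2*c) (3*d) 0 0 0 0 z * cub 0 0 (-1) 0 (2*c) (3*d) 0 0 0 0 z)) 

lemma BRF_contDiff {K : ℝ × ℝ → ℝ} (hK : ContDiff ℝ 2 K) (c d : ℝ) :
    ContDiff ℝ 2 (BRF K c d) := by
  unfold BRF cub
  apply ContDiff.sub
  · fun_prop
  · exact (contDiff_const.mul hK).mul (by fun_prop)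

lemma BRF_zero {K : ℝ × ℝ → ℝ} (hK0 : K 0 = -2) (c d : ℝ) : BRF K c d 0 = 0 := by
  simp [BRF, cub, hK0]

lemma BRF_deriv0 {K : ℝ × ℝ → ℝ} (hK : ContDiff ℝ 2 K) (hK0 : K 0 = -2) :
    HasFDerivAt (BRF K (fderiv ℝ K 0 (1,0)/4 - 1) (fderiv ℝ K 0 (0,1)/12)) (0 : ℝ×ℝ →L[ℝ] ℝ) 0 := by
  set c := fderiv ℝ K 0 (1,0)/4 - 1 with hc
  set d := fderiv ℝ K 0 (0,1)/12 with hd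
  have HK : HasFDerivAt K (fderiv ℝ K 0) 0 :=
    (hK.differentiable two_ne_zero 0).hasFDerivAt
  have HP := cub_hasFDerivAt (-1) (2*c) (6*d) 0 0 (-(2*c*(2*c))) 0 0 0 0 (0 : ℝ × ℝ)
  have H1 := cub_hasFDerivAt 0 1 0 0 0 c 0 0 0 0 (0 : ℝ × ℝ)
  have H2 := cub_hasFDerivAt 0 0 (-1) 0 (2*c) (3*d) 0 0 0 0 (0 : ℝ × ℝ)
  have HQ := ((hasFDerivAt_const (1:ℝ) (0:ℝ×ℝ)).add (H1.const_mul 2)).add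
    ((H1.mul H1).add (H2.mul H2))
  refine HasFDerivAt.congr_fderiv (HP.sub ((HK.const_mul (2:ℝ)⁻¹).mul HQ)) ?_
  refine ContinuousLinearMap.ext fun v => ?_
  obtain ⟨v1, v2⟩ := v
  have hv : ((v1, v2) : ℝ × ℝ) = v1 • ((1:ℝ),(0:ℝ)) + v2 • ((0:ℝ),(1:ℝ)) := by
    simp [Prod.ext_iff]
  rw [hv]
  simp [cub, map_add, map_smul, ContinuousLinearMap.smul_apply, ContinuousLinearMap.add_apply,
    smul_eq_mul]
  ring_nf
  rw [hv, map_add, map_smul, map_smul]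
  simp [hK0, smul_eq_mul]
  ring



lemma quad_bound {F : ℝ × ℝ → ℝ} (hF2 : ContDiff ℝ 2 F) (h0 : F 0 = 0)
    (hd0 : HasFDerivAt F (0 : ℝ × ℝ →L[ℝ] ℝ) 0) :
    ∃ C > (0:ℝ), ∃ r > (0:ℝ), ∀ x : ℝ × ℝ, Real.sqrt (x.1^2 + x.2^2) ≤ r →
      |F x| ≤ C * (x.1^2 + x.2^2) := by
  have hFdiff : Differentiable ℝ F := hF2.differentiable two_ne_zero
  have hg : ContDiff ℝ 1 (fderiv ℝ F) := hF2.fderiv_right (by norm_num)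
  have hga : DifferentiableAt ℝ (fderiv ℝ F) 0 := (hg.differentiable one_ne_zero) 0
  have hO : (fun y => fderiv ℝ F y) =O[nhds 0] fun y : ℝ × ℝ => y := by
    have h := hga.hasFDerivAt.isBigO_sub
    simpa [hd0.fderiv] using h
  obtain ⟨C0, hC0⟩ := hO.bound
  rw [Metric.eventually_nhds_iff] at hC0
  obtain ⟨ε, hε, hball⟩ := hC0
  refine ⟨|C0| + 1, by positivity, min (ε/2) 1, by positivity, fun x hx => ?_⟩
  have hx1 : ‖x‖ ≤ Real.sqrt (x.1^2 + x.2^2) := by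
    rw [Prod.norm_def]
    apply max_le <;> rw [Real.norm_eq_abs, ← Real.sqrt_sq_eq_abs] <;>
      exact Real.sqrt_le_sqrt (by nlinarith [sq_nonneg x.1, sq_nonneg x.2])
  have hxr : ‖x‖ ≤ min (ε/2) 1 := hx1.trans hx
  have key : ‖F x - F 0‖ ≤ (|C0|+1) * ‖x‖ * ‖x - 0‖ := by
    refine Convex.norm_image_sub_le_of_norm_fderiv_le
      (s := Metric.closedBall (0:ℝ×ℝ) ‖x‖)
      (fun y _ => hFdiff y)
      (fun y hy => ?_) (convex_closedBall _ _)
      (Metric.mem_closedBall_self (norm_nonneg x)) ?_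
    · have hyx : ‖y‖ ≤ ‖x‖ := by simpa [dist_zero_right] using hy
      have hyε : dist y 0 < ε := by
        rw [dist_zero_right]
        calc ‖y‖ ≤ ‖x‖ := hyx
          _ ≤ ε/2 := hxr.trans (min_le_left _ _)
          _ < ε := by linarith
      have hb := hball hyε
      simp -failIfUnchanged only [Real.norm_eq_abs, norm_norm] at hb ⊢
      calc ‖fderiv ℝ F y‖ ≤ C0 * ‖y‖ := hb
        _ ≤ (|C0|+1) * ‖x‖ := by
            nlinarith [norm_nonneg y, norm_nonneg x, le_abs_self C0, abs_nonneg C0]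
    · simpa [Metric.mem_closedBall, dist_zero_right] using le_refl ‖x‖
  have h2 : ‖x‖ * ‖x‖ ≤ x.1^2 + x.2^2 := by
    rw [Prod.norm_def, Real.norm_eq_abs, Real.norm_eq_abs]
    rcases max_cases |x.1| |x.2| with ⟨h,_⟩|⟨h,_⟩ <;> rw [h] <;>
      nlinarith [sq_abs x.1, sq_abs x.2, sq_nonneg x.1, sq_nonneg x.2]
  have : |F x| ≤ (|C0|+1) * (‖x‖ * ‖x‖) := by
    have := key
    rw [h0, sub_zero, sub_zero] at this
    calc |F x| = ‖F x‖ := (Real.norm_eq_abs _).symm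
      _ ≤ (|C0|+1) * ‖x‖ * ‖x‖ := this
      _ = (|C0|+1) * (‖x‖ * ‖x‖) := by ring
  calc |F x| ≤ (|C0|+1) * (‖x‖ * ‖x‖) := this
    _ ≤ (|C0|+1) * (x.1^2 + x.2^2) := by
        apply mul_le_mul_of_nonneg_left h2 (by positivity)

/-- Hyperbolic case: if `K` is `C²` with `K(0) = −2`, there exist cubic coefficients
`(a,b,c,d)` such that `ĥ(x) = x₁²/2 − x₂²/2 + a x₁³ + b x₁²x₂ + c x₁x₂² + d x₂³`
solves the Euclidean-model Bao–Ratiu Monge–Ampère equation up to a quadratic error. -/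
theorem stmt4 (K : ℝ × ℝ → ℝ) (hK : ContDiff ℝ 2 K) (hK0 : K (0, 0) = -2) :
    ∃ a b c d : ℝ,
      ∃ C > (0 : ℝ), ∃ r > (0 : ℝ), ∀ x : ℝ × ℝ, Real.sqrt (x.1 ^ 2 + x.2 ^ 2) ≤ r →
        |detHess (fun y => (1 / 2) * y.1 ^ 2 - (1 / 2) * y.2 ^ 2
              + a * y.1 ^ 3 + b * y.1 ^ 2 * y.2 + c * y.1 * y.2 ^ 2 + d * y.2 ^ 3) x
            - K x / 2 *
              (1 + 2 * pd1 (fun y => (1 / 2) * y.1 ^ 2 - (1 / 2) * y.2 ^ 2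
                    + a * y.1 ^ 3 + b * y.1 ^ 2 * y.2 + c * y.1 * y.2 ^ 2 + d * y.2 ^ 3) x
                + ((pd1 (fun y => (1 / 2) * y.1 ^ 2 - (1 / 2) * y.2 ^ 2
                      + a * y.1 ^ 3 + b * y.1 ^ 2 * y.2 + c * y.1 * y.2 ^ 2 + d * y.2 ^ 3) x) ^ 2
                  + (pd2 (fun y => (1 / 2) * y.1 ^ 2 - (1 / 2) * y.2 ^ 2
                      + a * y.1 ^ 3 + b * y.1 ^ 2 * y.2 + c * y.1 * y.2 ^ 2 + d * y.2 ^ 3) x) ^ 2))|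
          ≤ C * (x.1 ^ 2 + x.2 ^ 2) := by
  have hK0' : K 0 = -2 := by rw [← Prod.mk_zero_zero]; exact hK0
  set c : ℝ := fderiv ℝ K 0 (1,0)/4 - 1 with hc
  set d : ℝ := fderiv ℝ K 0 (0,1)/12 with hd
  refine ⟨0, 0, c, d, ?_⟩
  have hfun : (fun y : ℝ × ℝ => (1 / 2) * y.1 ^ 2 - (1 / 2) * y.2 ^ 2
      + 0 * y.1 ^ 3 + 0 * y.1 ^ 2 * y.2 + c * y.1 * y.2 ^ 2 + d * y.2 ^ 3)
      = cub 0 0 0 (1/2) 0 (-(1/2)) 0 0 c d := by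
    funext y; simp only [cub]; ring
  obtain ⟨C, hC, r, hr, hb⟩ := quad_bound (BRF_contDiff hK c d) (BRF_zero hK0' c d)
    (BRF_deriv0 hK hK0')
  refine ⟨C, hC, r, hr, fun x hx => ?_⟩
  have e : detHess (fun y : ℝ × ℝ => (1 / 2) * y.1 ^ 2 - (1 / 2) * y.2 ^ 2
      + 0 * y.1 ^ 3 + 0 * y.1 ^ 2 * y.2 + c * y.1 * y.2 ^ 2 + d * y.2 ^ 3) x
            - K x / 2 *
              (1 + 2 * pd1 (fun y : ℝ × ℝ => (1 / 2) * y.1 ^ 2 - (1 / 2) * y.2 ^ 2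
                    + 0 * y.1 ^ 3 + 0 * y.1 ^ 2 * y.2 + c * y.1 * y.2 ^ 2 + d * y.2 ^ 3) x
                + ((pd1 (fun y : ℝ × ℝ => (1 / 2) * y.1 ^ 2 - (1 / 2) * y.2 ^ 2
                      + 0 * y.1 ^ 3 + 0 * y.1 ^ 2 * y.2 + c * y.1 * y.2 ^ 2 + d * y.2 ^ 3) x) ^ 2
                  + (pd2 (fun y : ℝ × ℝ => (1 / 2) * y.1 ^ 2 - (1 / 2) * y.2 ^ 2
                      + 0 * y.1 ^ 3 + 0 * y.1 ^ 2 * y.2 + c * y.1 * y.2 ^ 2 + d * y.2 ^ 3) x) ^ 2))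
      = BRF K c d x := by
    rw [hfun]
    simp only [detHess, pd1_cub, pd2_cub, BRF, cub]
    ring
  rw [e]
  exact hb x hx
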